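/- δ(S₅) > 16, where S₅ is the symmetric group on 5 letters. -/

import Mathlib

set_option maxRecDepth 100000

/-- A maximal chain of `H` in the ambient group of length `r`: a chain
`H = c 0 < c 1 < ... < c r = ⊤` where each `c i` is a maximal subgroup of `c (i+1)`,
i.e. each step is a covering relation in the subgroup lattice. -/
def IsMaxChainOf {G : Type*} [Group G] (H : Subgroup G) (r : ℕ) (c : ℕ → Subgroup G) : Prop :=
  c 0 = H ∧ c r = ⊤ ∧ ∀ i < r, c i ⋖ c (i + 1)

/-- All maximal chains of `H` in the ambient group have the same length. -/
def AllMaxChainsSameLength {G : Type*} [Group G] (H : Subgroup G) : Prop :=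
  ∀ (r s : ℕ) (c d : ℕ → Subgroup G),
    IsMaxChainOf H r c → IsMaxChainOf H s d → r = s


/-- `delta G` is the number of subgroups of `G` not all of whose maximal chains
in `G` have the same length. -/
noncomputable def delta (G : Type*) [Group G] : ℕ :=
  Nat.card {H : Subgroup G // ¬ AllMaxChainsSameLength H}

namespace S5Proof

abbrev G5 := Equiv.Perm (Fin 5)

def pp (l : List (Fin 5)) : G5 := l.formPerm

def cperm : G5 := pp [0,1,2,3,4]
def sperm : G5 := pp [1,2,4,3]
def LP : Finset G5 := {(1 : G5), pp [0,1,2,3,4], pp [0,2,4,1,3], pp [0,3,1,4,2], pp [0,4,3,2,1]}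
def LV : Finset G5 := {(1 : G5), pp [1,2] * pp [3,4], pp [1,3] * pp [2,4], pp [1,4] * pp [2,3]}
def L8 : Finset G5 := {(1 : G5), pp [2,3], pp [1,2] * pp [3,4], pp [1,2,4,3], pp [1,3,4,2], pp [1,3] * pp [2,4], pp [1,4], pp [1,4] * pp [2,3]}
def L10 : Finset G5 := {(1 : G5), pp [1,4] * pp [2,3], pp [0,1] * pp [2,4], pp [0,1,2,3,4], pp [0,2] * pp [3,4], pp [0,2,4,1,3], pp [0,3] * pp [1,2], pp [0,3,1,4,2], pp [0,4,3,2,1], pp [0,4] * pp [1,3]}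
def kap : Fin 17 → Finset G5 := ![{(1 : G5)}, {(1 : G5), pp [1,4] * pp [2,3]}, {(1 : G5), pp [1,2,4,3], pp [1,3,4,2], pp [1,4] * pp [2,3]}, {(1 : G5), pp [0,1,2,3], pp [0,2] * pp [1,3], pp [0,3,2,1]}, {(1 : G5), pp [0,1,2,4], pp [0,2] * pp [1,4], pp [0,4,2,1]}, {(1 : G5), pp [0,1,3,2], pp [0,2,3,1], pp [0,3] * pp [1,2]}, {(1 : G5), pp [0,1,3,4], pp [0,3] * pp [1,4], pp [0,4,3,1]}, {(1 : G5), pp [0,1,4,2], pp [0,2,4,1], pp [0,4] * pp [1,2]}, {(1 : G5), pp [0,1,4,3], pp [0,3,4,1], pp [0,4] * pp [1,3]}, {(1 : G5), pp [0,1] * pp [2,3], pp [0,2,1,3], pp [0,3,1,2]}, {(1 : G5), pp [0,1] * pp [2,4], pp [0,2,1,4], pp [0,4,1,2]}, {(1 : G5), pp [0,2,3,4], pp [0,3] * pp [2,4], pp [0,4,3,2]}, {(1 : G5), pp [0,2,4,3], pp [0,3,4,2], pp [0,4] * pp [2,3]}, {(1 : G5), pp [0,1] * pp [3,4], pp [0,3,1,4],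 pp [0,4,1,3]}, {(1 : G5), pp [0,2] * pp [3,4], pp [0,3,2,4], pp [0,4,2,3]}, {(1 : G5), pp [1,2,3,4], pp [1,3] * pp [2,4], pp [1,4,3,2]}, {(1 : G5), pp [1,2] * pp [3,4], pp [1,3,2,4], pp [1,4,2,3]}]
def gg : Fin 15 → G5 := ![(1 : G5), pp [0,4,2,1], pp [0,3,4,2,1], pp [0,4,3,2,1], pp [0,2,1] * pp [3,4], pp [0,3,2,1], pp [0,2,1], pp [0,4,1], pp [0,3,4,1], pp [0,1] * pp [3,4], pp [0,1], pp [0,2,3,4,1], pp [0,1] * pp [2,3,4], pp [3,4], pp [2,3,4]]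

def LP1 : Finset G5 := {(1 : G5), pp [0,1,2,4,3], pp [0,2,3,1,4], pp [0,4,1,3,2], pp [0,3,4,2,1]}


/-- Build a subgroup from a multiplicatively closed finset. -/
def ofFinset (L : Finset G5) (h1 : (1:G5) ∈ L)
    (hm : ∀ a ∈ L, ∀ b ∈ L, a * b ∈ L) (hi : ∀ a ∈ L, a⁻¹ ∈ L) : Subgroup G5 where
  carrier := L
  one_mem' := h1
  mul_mem' := fun ha hb => hm _ ha _ hb
  inv_mem' := fun ha => hi _ ha

lemma mem_ofFinset {L : Finset G5} {h1 hm hi} {x : G5} :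
    x ∈ ofFinset L h1 hm hi ↔ x ∈ L := Iff.rfl

lemma card_ofFinset (L : Finset G5) (h1 hm hi) :
    Nat.card (ofFinset L h1 hm hi) = L.card := by
  have : Nat.card (↑L : Set G5) = L.card := by
    rw [Nat.card_coe_set_eq, Set.ncard_coe_finset]
  exact this

def P0 : Subgroup G5 := ofFinset LP (by decide) (by decide) (by decide)
def P1 : Subgroup G5 := ofFinset LP1 (by decide) (by decide) (by decide)
def VV : Subgroup G5 := ofFinset LV (by decide) (by decide) (by decide)
def DD8 : Subgroup G5 := ofFinset L8 (by decide) (by decide) (by decide)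
def DD10 : Subgroup G5 := ofFinset L10 (by decide) (by decide) (by decide)

def S4 : Subgroup G5 := MulAction.stabilizer G5 (0 : Fin 5)

def f (i : Fin 17) : Subgroup G5 :=
  ofFinset (kap i)
    (by revert i; decide)
    (by revert i; decide)
    (by revert i; decide)

lemma kap_inj : ∀ i j : Fin 17, kap i = kap j → i = j := by decide

lemma f_inj : Function.Injective f := by
  intro i j h
  have h2 : (kap i : Set G5) = (kap j : Set G5) := congrArg (fun H : Subgroup G5 => (H : Set G5)) h
  exact kap_inj i j (Finset.coe_injective h2)

lemma cardG5 : Nat.card G5 = 120 := by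
  rw [Nat.card_eq_fintype_card, Fintype.card_perm, Fintype.card_fin]
  decide

instance : MulAction.IsPretransitive G5 (Fin 5) :=
  ⟨fun x y => ⟨Equiv.swap x y, Equiv.swap_apply_left x y⟩⟩

lemma cardS4 : Nat.card S4 = 24 := by
  have h1 : S4.index = 5 := by
    rw [S4, MulAction.index_stabilizer_of_transitive]
    simp [Nat.card_eq_fintype_card]
  have h2 := Subgroup.card_mul_index S4
  rw [h1, cardG5] at h2
  omega

instance fact5 : Fact (Nat.Prime 5) := ⟨by norm_num⟩

/-- Any subgroup of order 5 gives a Sylow 5-subgroup. -/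
def sylOfCard5 (P : Subgroup G5) (h5 : Nat.card P = 5) : Sylow 5 G5 :=
  ⟨P, IsPGroup.of_card (h5.trans (pow_one 5).symm), by
    intro Q hQ hle
    obtain ⟨k, hk⟩ := IsPGroup.iff_card.mp hQ
    have hdvd : Nat.card Q ∣ 120 := cardG5 ▸ Subgroup.card_subgroup_dvd_card Q
    have hk1 : k ≤ 1 := by
      by_contra hk2
      have : (5:ℕ) ^ 2 ∣ 5 ^ k := pow_dvd_pow 5 (by omega)
      rw [← hk] at this
      have : (25:ℕ) ∣ 120 := dvd_trans (by norm_num) (this.trans hdvd)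
      norm_num at this
    have hcard : Nat.card Q ≤ Nat.card P := by
      rw [hk, h5]
      calc (5:ℕ) ^ k ≤ 5 ^ 1 := Nat.pow_le_pow_right (by norm_num) hk1
      _ = 5 := by norm_num
    exact (Subgroup.eq_of_le_of_card_ge hle hcard).symm⟩

lemma cardP0 : Nat.card P0 = 5 := (card_ofFinset _ _ _ _).trans (by decide)
lemma cardP1 : Nat.card P1 = 5 := (card_ofFinset _ _ _ _).trans (by decide)

def P0syl : Sylow 5 G5 := sylOfCard5 P0 cardP0
def P1syl : Sylow 5 G5 := sylOfCard5 P1 cardP1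

lemma n5 : Nat.card (Sylow 5 G5) = 6 := by
  have hmod : Nat.card (Sylow 5 G5) % 5 = 1 % 5 := card_sylow_modEq_one 5 G5
  have hidx : (P0 : Subgroup G5).index = 24 := by
    have h2 := Subgroup.card_mul_index P0
    rw [cardP0, cardG5] at h2; omega
  have hdvd : Nat.card (Sylow 5 G5) ∣ 24 := hidx ▸ P0syl.card_dvd_index
  have hne : Nat.card (Sylow 5 G5) ≠ 1 := by
    intro h
    have hsub : Subsingleton (Sylow 5 G5) := (Nat.card_eq_one_iff_unique.mp h).1
    have hPP : P0 = P1 := congrArg Sylow.toSubgroup (Subsingleton.elim P0syl P1syl)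
    have hmem : pp [0,1,2,4,3] ∈ P1 := by
      show pp [0,1,2,4,3] ∈ LP1
      decide
    rw [← hPP] at hmem
    have hmem2 : pp [0,1,2,4,3] ∈ LP := hmem
    exact absurd hmem2 (by decide)
  have hle : Nat.card (Sylow 5 G5) ≤ 24 := Nat.le_of_dvd (by norm_num) hdvd
  interval_cases h : Nat.card (Sylow 5 G5) <;> omega

def NN : Subgroup G5 := Subgroup.normalizer ((P0 : Subgroup G5) : Set G5)

lemma indexNN : NN.index = 6 := by
  have := Sylow.card_eq_index_normalizer P0syl
  rw [n5] at this
  exact this.symm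

lemma cardNN : Nat.card NN = 20 := by
  have h2 := Subgroup.card_mul_index NN
  rw [indexNN, cardG5] at h2; omega

lemma NN_ne_top : NN ≠ ⊤ := by
  intro h
  have := indexNN
  rw [h, Subgroup.index_top] at this
  norm_num at this

lemma NN_covby : NN ⋖ ⊤ := by
  refine ⟨lt_top_iff_ne_top.mpr NN_ne_top, ?_⟩
  intro K hNK hK
  have hPK : (P0 : Subgroup G5) ≤ K := le_trans Subgroup.le_normalizer hNK.le
  have hNKle : NN ≤ K := hNK.le
  have hcardsyl : Nat.card (Sylow 5 K) = NN.relIndex K := by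
    rw [Sylow.card_eq_index_normalizer (P0syl.subtype hPK)]
    have hco : ((P0syl.subtype hPK) : Subgroup K) = (P0 : Subgroup G5).subgroupOf K :=
      Sylow.coe_subtype _ _
    rw [show Subgroup.normalizer ((P0syl.subtype hPK : Sylow 5 K) : Set K) = Subgroup.normalizer ((P0 : Subgroup G5).subgroupOf K : Set K) by rw [← hco]; rfl, ← Subgroup.subgroupOf_normalizer_eq hPK]
    rfl
  have hmod : NN.relIndex K % 5 = 1 % 5 := by
    rw [← hcardsyl]; exact card_sylow_modEq_one 5 K
  have hrel : NN.relIndex K * K.index = 6 := by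
    rw [Subgroup.relIndex_mul_index hNKle, indexNN]
  have hdvd : NN.relIndex K ∣ 6 := Dvd.intro _ hrel
  have hle6 : NN.relIndex K ≤ 6 := Nat.le_of_dvd (by norm_num) hdvd
  have h16 : NN.relIndex K = 1 ∨ NN.relIndex K = 6 := by omega
  rcases h16 with h1 | h6
  · exact hNK.not_ge (Subgroup.relIndex_eq_one.mp h1)
  · rw [h6] at hrel
    have : K.index = 1 := by omega
    exact hK.ne (Subgroup.index_eq_one.mp this)

lemma relindex_mul_card {H K : Subgroup G5} (h : H ≤ K) :
    H.relIndex K * Nat.card H = Nat.card K := by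
  have h3 : Nat.card (H.subgroupOf K) = Nat.card H :=
    Nat.card_congr (Subgroup.subgroupOfEquivOfLe h).toEquiv
  have h2 := Subgroup.card_mul_index (H.subgroupOf K)
  rw [h3] at h2
  rw [Subgroup.relIndex, mul_comm]
  exact h2

lemma covby_of_relindex_prime {H K : Subgroup G5} (hle : H ≤ K)
    (hp : (H.relIndex K).Prime) : H ⋖ K := by
  have hlt : H < K := hle.lt_of_ne (by
    rintro rfl
    rw [Subgroup.relIndex_self] at hp
    exact hp.one_lt.ne' rfl)
  refine ⟨hlt, ?_⟩
  intro M hHM hMK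
  have h1 : H.relIndex M * M.relIndex K = H.relIndex K :=
    Subgroup.relIndex_mul_relIndex (H := H) (K := M) (L := K) hHM.le hMK.le
  have ha : H.relIndex M ≠ 1 := fun h => hHM.not_ge (Subgroup.relIndex_eq_one.mp h)
  have hd : H.relIndex M ∣ H.relIndex K := Dvd.intro _ h1
  have heq : H.relIndex M = H.relIndex K :=
    (hp.eq_one_or_self_of_dvd _ hd).resolve_left ha
  rw [heq] at h1
  have hb : M.relIndex K = 1 := by
    have := hp.pos
    nlinarith [h1]
  exact hMK.not_ge (Subgroup.relIndex_eq_one.mp hb)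

lemma covby_of_cards {H K : Subgroup G5} (hle : H ≤ K) {a b : ℕ}
    (hH : Nat.card H = a) (hK : Nat.card K = b) (hp : (b / a).Prime) (ha : a ≠ 0)
    (hab : a * (b / a) = b) : H ⋖ K := by
  apply covby_of_relindex_prime hle
  have := relindex_mul_card hle
  rw [hH, hK] at this
  have h4 : H.relIndex K * a = (b / a) * a := by
    rw [this, mul_comm, hab]
  have h5 : H.relIndex K = b / a :=
    Nat.eq_of_mul_eq_mul_right (Nat.pos_of_ne_zero ha) h4
  rw [h5]; exact hp

lemma le_ofFinset {L L' : Finset G5} {h1 hm hi h1' hm' hi'} (h : L ⊆ L') :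
    ofFinset L h1 hm hi ≤ ofFinset L' h1' hm' hi' := fun _ hx => h hx

lemma le_NN_ofFinset {L : Finset G5} {h1 hm hi}
    (h : ∀ x ∈ L, ∀ n ∈ LP, x * n * x⁻¹ ∈ LP) :
    ofFinset L h1 hm hi ≤ NN := by
  intro x hx
  exact Subgroup.mem_normalizer_fintype (fun n hn => h x hx n hn)

lemma le_S4_ofFinset {L : Finset G5} {h1 hm hi}
    (h : ∀ x ∈ L, x • (0 : Fin 5) = 0) :
    ofFinset L h1 hm hi ≤ S4 := by
  intro x hx
  exact MulAction.mem_stabilizer_iff.mpr (h x hx)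

lemma cardf : ∀ i : Fin 17, Nat.card (f i) = (kap i).card := fun _ => card_ofFinset _ _ _ _
lemma cardf0 : Nat.card (f 0) = 1 := (cardf 0).trans (by decide)
lemma cardf1 : Nat.card (f 1) = 2 := (cardf 1).trans (by decide)
lemma cardf2 : Nat.card (f 2) = 4 := (cardf 2).trans (by decide)
lemma cardVV : Nat.card VV = 4 := (card_ofFinset _ _ _ _).trans (by decide)
lemma cardD8 : Nat.card DD8 = 8 := (card_ofFinset _ _ _ _).trans (by decide)
lemma cardD10 : Nat.card DD10 = 10 := (card_ofFinset _ _ _ _).trans (by decide)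
lemma cardTop : Nat.card (⊤ : Subgroup G5) = 120 := Subgroup.card_top.trans cardG5

lemma cov_f0_P0 : f 0 ⋖ P0 :=
  covby_of_cards (le_ofFinset (by decide)) cardf0 cardP0 (by norm_num) (by norm_num) (by norm_num)
lemma cov_f0_f1 : f 0 ⋖ f 1 :=
  covby_of_cards (le_ofFinset (by decide)) cardf0 cardf1 (by norm_num) (by norm_num) (by norm_num)
lemma cov_f1_VV : f 1 ⋖ VV :=
  covby_of_cards (le_ofFinset (by decide)) cardf1 cardVV (by norm_num) (by norm_num) (by norm_num)
lemma cov_VV_D8 : VV ⋖ DD8 :=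
  covby_of_cards (le_ofFinset (by decide)) cardVV cardD8 (by norm_num) (by norm_num) (by norm_num)
lemma cov_D8_S4 : DD8 ⋖ S4 :=
  covby_of_cards (le_S4_ofFinset (by decide)) cardD8 cardS4 (by norm_num) (by norm_num) (by norm_num)
lemma cov_S4_top : S4 ⋖ ⊤ :=
  covby_of_cards le_top cardS4 cardTop (by norm_num) (by norm_num) (by norm_num)
lemma cov_f1_D10 : f 1 ⋖ DD10 :=
  covby_of_cards (le_ofFinset (by decide)) cardf1 cardD10 (by norm_num) (by norm_num) (by norm_num)
lemma cov_D10_NN : DD10 ⋖ NN :=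
  covby_of_cards (le_NN_ofFinset (by decide)) cardD10 cardNN (by norm_num) (by norm_num) (by norm_num)
lemma cov_P0_D10 : P0 ⋖ DD10 :=
  covby_of_cards (le_ofFinset (by decide)) cardP0 cardD10 (by norm_num) (by norm_num) (by norm_num)
lemma cov_f2_D8 : f 2 ⋖ DD8 :=
  covby_of_cards (le_ofFinset (by decide)) cardf2 cardD8 (by norm_num) (by norm_num) (by norm_num)
lemma cov_f2_NN : f 2 ⋖ NN :=
  covby_of_cards (le_NN_ofFinset (by decide)) cardf2 cardNN (by norm_num) (by norm_num) (by norm_num)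

lemma notAll_of_two {H : Subgroup G5} {r s : ℕ} {cA cB : ℕ → Subgroup G5}
    (hA : IsMaxChainOf H r cA) (hB : IsMaxChainOf H s cB) (hrs : r ≠ s) :
    ¬ AllMaxChainsSameLength H := fun h => hrs (h r s cA cB hA hB)

lemma notAll0 : ¬ AllMaxChainsSameLength (f 0) := by
  refine notAll_of_two (r := 4) (s := 5)
    (cA := fun n => [f 0, P0, DD10, NN].getD n ⊤)
    (cB := fun n => [f 0, f 1, VV, DD8, S4].getD n ⊤) ⟨rfl, rfl, ?_⟩ ⟨rfl, rfl, ?_⟩ (by norm_num)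
  · intro i hi
    interval_cases i
    · exact cov_f0_P0
    · exact cov_P0_D10
    · exact cov_D10_NN
    · exact NN_covby
  · intro i hi
    interval_cases i
    · exact cov_f0_f1
    · exact cov_f1_VV
    · exact cov_VV_D8
    · exact cov_D8_S4
    · exact cov_S4_top

lemma notAll1 : ¬ AllMaxChainsSameLength (f 1) := by
  refine notAll_of_two (r := 3) (s := 4)
    (cA := fun n => [f 1, DD10, NN].getD n ⊤)
    (cB := fun n => [f 1, VV, DD8, S4].getD n ⊤) ⟨rfl, rfl, ?_⟩ ⟨rfl, rfl, ?_⟩ (by norm_num)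
  · intro i hi
    interval_cases i
    · exact cov_f1_D10
    · exact cov_D10_NN
    · exact NN_covby
  · intro i hi
    interval_cases i
    · exact cov_f1_VV
    · exact cov_VV_D8
    · exact cov_D8_S4
    · exact cov_S4_top

lemma notAll2 : ¬ AllMaxChainsSameLength (f 2) := by
  refine notAll_of_two (r := 2) (s := 3)
    (cA := fun n => [f 2, NN].getD n ⊤)
    (cB := fun n => [f 2, DD8, S4].getD n ⊤) ⟨rfl, rfl, ?_⟩ ⟨rfl, rfl, ?_⟩ (by norm_num)
  · intro i hi
    interval_cases i
    · exact cov_f2_NN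
    · exact NN_covby
  · intro i hi
    interval_cases i
    · exact cov_f2_D8
    · exact cov_D8_S4
    · exact cov_S4_top

lemma notAll_map (e : G5 ≃* G5) {H : Subgroup G5} (h : ¬ AllMaxChainsSameLength H) :
    ¬ AllMaxChainsSameLength ((MulEquiv.mapSubgroup e) H) := by
  intro hall
  apply h
  intro r s cc d hc hd
  refine hall r s (fun n => (MulEquiv.mapSubgroup e) (cc n))
    (fun n => (MulEquiv.mapSubgroup e) (d n))
    ⟨congrArg _ hc.1,
      by show (MulEquiv.mapSubgroup e) (cc r) = ⊤; rw [hc.2.1]; exact OrderIso.map_top _,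
      fun i hi => (apply_covBy_apply_iff (MulEquiv.mapSubgroup e)).mpr (hc.2.2 i hi)⟩
    ⟨congrArg _ hd.1,
      by show (MulEquiv.mapSubgroup e) (d s) = ⊤; rw [hd.2.1]; exact OrderIso.map_top _,
      fun i hi => (apply_covBy_apply_iff (MulEquiv.mapSubgroup e)).mpr (hd.2.2 i hi)⟩

def jj (k : Fin 15) : Fin 17 := ⟨k.1 + 2, by omega⟩

lemma hkey : ∀ k : Fin 15, ∀ x ∈ kap (jj k), (gg k)⁻¹ * x * (gg k) ∈ kap 2 := by decide

lemma card_kap_jj : ∀ k : Fin 15, (kap (jj k)).card = 4 := by decide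

lemma f_map (k : Fin 15) :
    f (jj k) = (MulEquiv.mapSubgroup (MulAut.conj (gg k))) (f 2) := by
  have le1 : f (jj k) ≤ (MulEquiv.mapSubgroup (MulAut.conj (gg k))) (f 2) := by
    intro x hx
    rw [MulEquiv.mapSubgroup_apply]
    refine Subgroup.mem_map.mpr ⟨(gg k)⁻¹ * x * (gg k), hkey k x hx, ?_⟩
    simp [MulAut.conj_apply]
    group
  have hcards : Nat.card ((MulEquiv.mapSubgroup (MulAut.conj (gg k))) (f 2)) = 4 := by
    rw [MulEquiv.mapSubgroup_apply]
    rw [← cardf2]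
    exact (Nat.card_congr ((MulAut.conj (gg k)).subgroupMap (f 2)).toEquiv).symm
  refine Subgroup.eq_of_le_of_card_ge le1 ?_
  rw [hcards, cardf (jj k), card_kap_jj k]

lemma key : ∀ i : Fin 17, ¬ AllMaxChainsSameLength (f i) := by
  intro i
  match i with
  | ⟨0, _⟩ => exact notAll0
  | ⟨1, _⟩ => exact notAll1
  | ⟨k+2, hk⟩ =>
    exact f_map ⟨k, by omega⟩ ▸ notAll_map (MulAut.conj (gg ⟨k, by omega⟩)) notAll2

instance : Finite (Subgroup G5) := Finite.of_injective _ SetLike.coe_injective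

end S5Proof

open S5Proof in
theorem stmt_17 : delta (Equiv.Perm (Fin 5)) > 16 := by
  have hinj : Function.Injective
      (fun i : Fin 17 => (⟨f i, key i⟩ : {H : Subgroup G5 // ¬ AllMaxChainsSameLength H})) :=
    fun a b h => f_inj (congrArg Subtype.val h)
  have hle := Nat.card_le_card_of_injective _ hinj
  rw [Nat.card_eq_fintype_card, Fintype.card_fin] at hle
  unfold delta
  exact lt_of_lt_of_le (by norm_num) hle
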